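/- Let α > 0, t₁ ∈ (0,1/2) with 4t₁³ − 3(2 + 1/α)t₁² + 1 = 0, t₂ = 1 − t₁, λ̄₁ = 2α/t₁², u₁ = −(λ̄₁/2)(1 − 2t₁) − 1, u₃ = −(u₁ + 2), and u the piecewise linear control equal to u₁ on [0,t₁], u₁ + λ̄₁(t − t₁) on [t₁,t₂], u₃ on [t₂,1]. Then ∫₀¹ u(t) dt = −1 and ∫₀¹ (1 − t) u(t) dt = −1. -/

import Mathlib

open intervalIntegral MeasureTheory

lemma int_quad (a b A B C : ℝ) :
    ∫ t in a..b, (A + B*t + C*t^2) = A*(b-a) + B*(b^2-a^2)/2 + C*(b^3-a^3)/3 := by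
  have h1 : IntervalIntegrable (fun t : ℝ => A) volume a b := intervalIntegrable_const
  have h2 : IntervalIntegrable (fun t : ℝ => B*t) volume a b :=
    (intervalIntegral.intervalIntegrable_id).const_mul B
  have h3 : IntervalIntegrable (fun t : ℝ => C*t^2) volume a b :=
    ((intervalIntegrable_pow 2)).const_mul C
  rw [intervalIntegral.integral_add (h1.add h2) h3, intervalIntegral.integral_add h1 h2,
    intervalIntegral.integral_const, intervalIntegral.integral_const_mul,
    intervalIntegral.integral_const_mul, integral_id, integral_pow]
  push_cast
  rw [smul_eq_mul]
  ring

lemma piece (a b A B C : ℝ) (f : ℝ → ℝ)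
    (h : Set.EqOn f (fun t => A + B*t + C*t^2) (Set.uIcc a b)) :
    IntervalIntegrable f volume a b ∧
      ∫ t in a..b, f t = A*(b-a) + B*(b^2-a^2)/2 + C*(b^3-a^3)/3 := by
  have hc : Continuous (fun t : ℝ => A + B*t + C*t^2) := by continuity
  constructor
  · exact (hc.intervalIntegrable a b).congr
      (fun x hx => (h (Set.uIoc_subset_uIcc hx)).symm)
  · rw [intervalIntegral.integral_congr h, int_quad]

/-- Moment conditions for the candidate optimal control: ∫₀¹ u = −1 and ∫₀¹ (1−t)u = −1. -/
theorem candidate_control_moment_conditions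
    (α t₁ : ℝ) (hα : 0 < α) (ht₁ : t₁ ∈ Set.Ioo (0:ℝ) (1/2))
    (hcubic : 4*t₁^3 - 3*(2 + 1/α)*t₁^2 + 1 = 0)
    (t₂ lam u₁ u₃ : ℝ)
    (ht₂ : t₂ = 1 - t₁)
    (hlam : lam = 2*α/t₁^2)
    (hu₁ : u₁ = -(lam/2)*(1 - 2*t₁) - 1)
    (hu₃ : u₃ = -(u₁ + 2))
    (u : ℝ → ℝ)
    (hu : u = fun t => if t < t₁ then u₁ else if t < t₂ then u₁ + lam*(t - t₁) else u₃) :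
    (∫ t in (0:ℝ)..1, u t) = -1 ∧ (∫ t in (0:ℝ)..1, (1 - t) * u t) = -1 := by
  obtain ⟨h0, h12⟩ := ht₁
  have ht12 : t₁ < t₂ := by rw [ht₂]; linarith
  have ht21 : t₂ < 1 := by rw [ht₂]; linarith
  have hu3eq : u₃ = u₁ + lam*(t₂ - t₁) := by rw [hu₃, hu₁, ht₂]; ring
  -- EqOn facts
  have e1 : Set.EqOn u (fun t => u₁ + 0*t + 0*t^2) (Set.uIcc 0 t₁) := by
    intro t ht
    rw [Set.uIcc_of_le h0.le] at ht
    simp only [hu]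
    by_cases h : t < t₁
    · simp [h]
    · have heq : t = t₁ := le_antisymm ht.2 (not_lt.mp h)
      simp [h, heq, ht12]
  have e2 : Set.EqOn u (fun t => (u₁ - lam*t₁) + lam*t + 0*t^2) (Set.uIcc t₁ t₂) := by
    intro t ht
    rw [Set.uIcc_of_le ht12.le] at ht
    simp only [hu]
    rw [if_neg (not_lt.mpr ht.1)]
    by_cases h : t < t₂
    · simp [h]; ring
    · have heq : t = t₂ := le_antisymm ht.2 (not_lt.mp h)
      simp [h, heq, hu3eq]; ring
  have e3 : Set.EqOn u (fun t => u₃ + 0*t + 0*t^2) (Set.uIcc t₂ 1) := by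
    intro t ht
    rw [Set.uIcc_of_le ht21.le] at ht
    simp only [hu]
    rw [if_neg (not_lt.mpr (le_trans ht12.le ht.1)), if_neg (not_lt.mpr ht.1)]
    simp
  have g1 : Set.EqOn (fun t => (1-t) * u t) (fun t => u₁ + (-u₁)*t + 0*t^2) (Set.uIcc 0 t₁) := by
    intro t ht; simp only [e1 ht]; ring
  have g2 : Set.EqOn (fun t => (1-t) * u t)
      (fun t => (u₁ - lam*t₁) + (lam + lam*t₁ - u₁)*t + (-lam)*t^2) (Set.uIcc t₁ t₂) := by
    intro t ht; simp only [e2 ht]; ring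
  have g3 : Set.EqOn (fun t => (1-t) * u t) (fun t => u₃ + (-u₃)*t + 0*t^2) (Set.uIcc t₂ 1) := by
    intro t ht; simp only [e3 ht]; ring
  obtain ⟨i1, v1⟩ := piece 0 t₁ _ _ _ u e1
  obtain ⟨i2, v2⟩ := piece t₁ t₂ _ _ _ u e2
  obtain ⟨i3, v3⟩ := piece t₂ 1 _ _ _ u e3
  obtain ⟨j1, w1⟩ := piece 0 t₁ _ _ _ _ g1
  obtain ⟨j2, w2⟩ := piece t₁ t₂ _ _ _ _ g2
  obtain ⟨j3, w3⟩ := piece t₂ 1 _ _ _ _ g3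
  have split1 : (∫ t in (0:ℝ)..1, u t) = (∫ t in (0:ℝ)..t₁, u t) + (∫ t in t₁..t₂, u t)
      + (∫ t in t₂..(1:ℝ), u t) := by
    rw [intervalIntegral.integral_add_adjacent_intervals i1 i2,
      intervalIntegral.integral_add_adjacent_intervals (i1.trans i2) i3]
  have split2 : (∫ t in (0:ℝ)..1, (1-t) * u t) = (∫ t in (0:ℝ)..t₁, (1-t) * u t)
      + (∫ t in t₁..t₂, (1-t) * u t) + (∫ t in t₂..(1:ℝ), (1-t) * u t) := by
    rw [intervalIntegral.integral_add_adjacent_intervals j1 j2,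
      intervalIntegral.integral_add_adjacent_intervals (j1.trans j2) j3]
  have ht₁0 : t₁ ≠ 0 := ne_of_gt h0
  have hα0 : α ≠ 0 := ne_of_gt hα
  have hc' : 4*α*t₁^3 - 6*α*t₁^2 - 3*t₁^2 + α = 0 := by
    have h := hcubic
    field_simp at h
    linarith
  constructor
  · rw [split1, v1, v2, v3, hu3eq, hu₁, hlam, ht₂]
    field_simp
    ring_nf
  · rw [split2, w1, w2, w3, hu3eq, hu₁, hlam, ht₂]
    field_simp
    ring_nf
    linear_combination (-1) * hc'
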